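/- Let A, B be complex k×k matrices and v, w ∈ ℂᵏ satisfying vv* − ww* = [A,A*] + [B,B*] and wv* = [A,B]. Then v = 0 and w = 0. -/

import Mathlib

open scoped Matrix

namespace ADHM

noncomputable def wp {k : ℕ} (A B : Matrix (Fin k) (Fin k) ℂ) (l : List Bool) :
    Matrix (Fin k) (Fin k) ℂ :=
  (l.map fun b => bif b then A else B).prod

noncomputable def fw {k : ℕ} (A B : Matrix (Fin k) (Fin k) ℂ) (v w : Fin k → ℂ)
    (l : List Bool) : ℂ :=
  star v ⬝ᵥ (wp A B l *ᵥ w)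

variable {k : ℕ} (A B : Matrix (Fin k) (Fin k) ℂ) (v w : Fin k → ℂ)

@[simp] lemma wp_nil : wp A B [] = 1 := rfl

lemma wp_cons (b : Bool) (l : List Bool) :
    wp A B (b :: l) = (bif b then A else B) * wp A B l := by
  simp [wp]

lemma wp_append (l₁ l₂ : List Bool) :
    wp A B (l₁ ++ l₂) = wp A B l₁ * wp A B l₂ := by
  simp [wp]

lemma wp_replicate_true (a : ℕ) : wp A B (List.replicate a true) = A ^ a := by
  simp [wp, List.map_replicate, List.prod_replicate]

lemma wp_replicate_false (a : ℕ) : wp A B (List.replicate a false) = B ^ a := by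
  simp [wp, List.map_replicate, List.prod_replicate]

lemma vecMulVec_mulVec (a b x : Fin k → ℂ) :
    Matrix.vecMulVec a b *ᵥ x = (b ⬝ᵥ x) • a := by
  funext i
  simp only [Matrix.mulVec, Matrix.vecMulVec_apply, dotProduct, Pi.smul_apply,
    smul_eq_mul, Finset.sum_mul, Finset.mul_sum]
  exact Finset.sum_congr rfl fun j _ => by ring

lemma trace_mul_vecMulVec (a b : Fin k → ℂ) (M : Matrix (Fin k) (Fin k) ℂ) :
    Matrix.trace (M * Matrix.vecMulVec a b) = b ⬝ᵥ (M *ᵥ a) := by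
  simp only [Matrix.trace, Matrix.diag, Matrix.mul_apply, Matrix.vecMulVec_apply,
    dotProduct, Matrix.mulVec]
  refine Finset.sum_congr rfl fun i _ => ?_
  rw [Finset.mul_sum]
  exact Finset.sum_congr rfl fun j _ => by ring

lemma count_bool_add' (l : List Bool) : l.count true + l.count false = l.length := by
  induction l with
  | nil => rfl
  | cons b l ih => cases b <;> simp [List.count_cons] <;> omega

section WithC

variable (hC : Matrix.vecMulVec w (star v) = A * B - B * A)
include hC

lemma fw_swap (u u' : List Bool) :
    fw A B v w (u ++ false :: true :: u') =
      fw A B v w (u ++ true :: false :: u') - fw A B v w u * fw A B v w u' := by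
  have hBA : B * A = A * B - Matrix.vecMulVec w (star v) := by rw [hC, sub_sub_cancel]
  simp only [fw, wp_append, wp_cons, cond_true, cond_false]
  rw [show B * (A * wp A B u') = B * A * wp A B u' from (mul_assoc _ _ _).symm, hBA]
  rw [show A * (B * wp A B u') = A * B * wp A B u' from (mul_assoc _ _ _).symm]
  rw [sub_mul, mul_sub, Matrix.sub_mulVec, dotProduct_sub]
  congr 1
  rw [show (wp A B u * (Matrix.vecMulVec w (star v) * wp A B u')) *ᵥ w
      = wp A B u *ᵥ (Matrix.vecMulVec w (star v) *ᵥ (wp A B u' *ᵥ w)) by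
        rw [Matrix.mulVec_mulVec, Matrix.mulVec_mulVec, mul_assoc]]
  rw [vecMulVec_mulVec, Matrix.mulVec_smul, dotProduct_smul]
  simp [fw, mul_comm]

lemma fw_move (n : ℕ) (hs : ∀ l : List Bool, l.length < n → fw A B v w l = 0)
    (u : List Bool) :
    ∀ u'' : List Bool, (u ++ true :: u'').length = n →
      fw A B v w (u ++ true :: u'') = fw A B v w (true :: (u ++ u'')) := by
  induction u using List.reverseRecOn with
  | nil => intro u'' _; rfl
  | append_singleton u₀ b ih =>
    intro u'' hlen
    cases b with
    | true =>
      have h1 : (u₀ ++ [true]) ++ true :: u'' = u₀ ++ true :: (true :: u'') := by simp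
      have h2 : (true :: ((u₀ ++ [true]) ++ u'')) = true :: (u₀ ++ true :: u'') := by simp
      rw [h1, h2, ih (true :: u'') (by rw [← h1]; exact hlen)]
    | false =>
      have h1 : (u₀ ++ [false]) ++ true :: u'' = u₀ ++ false :: true :: u'' := by simp
      have h2 : (true :: ((u₀ ++ [false]) ++ u'')) = true :: (u₀ ++ false :: u'') := by simp
      simp only [List.length_append, List.length_cons, List.length_nil] at hlen
      have hu₀ : fw A B v w u₀ = 0 := hs u₀ (by omega)
      have hl3 : (u₀ ++ true :: (false :: u'')).length = n := by
        simp only [List.length_append, List.length_cons]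
        omega
      rw [h1, fw_swap A B v w hC u₀ u'', hu₀, zero_mul, sub_zero,
        ih (false :: u'') hl3, h2]

lemma fw_sort (n : ℕ) (hs : ∀ l : List Bool, l.length < n → fw A B v w l = 0) :
    ∀ (m a : ℕ) (l : List Bool), l.length = m → a + m = n →
      fw A B v w (List.replicate a true ++ l)
        = fw A B v w (List.replicate (a + l.count true) true
            ++ List.replicate (l.count false) false) := by
  intro m
  induction m with
  | zero =>
    intro a l hl _
    rw [List.length_eq_zero_iff] at hl
    subst hl
    simp
  | succ m ih =>
    intro a l hl han
    by_cases ht : true ∈ l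
    · obtain ⟨l₁, l₂, rfl⟩ := List.append_of_mem ht
      have h1 : List.replicate a true ++ (l₁ ++ true :: l₂)
          = (List.replicate a true ++ l₁) ++ true :: l₂ := by simp
      have hlen2 : ((List.replicate a true ++ l₁) ++ true :: l₂).length = n := by
        rw [← h1]
        simp only [List.length_append, List.length_replicate, List.length_cons] at hl ⊢
        omega
      rw [h1, fw_move A B v w hC n hs _ _ hlen2]
      have h3 : true :: ((List.replicate a true ++ l₁) ++ l₂)
          = List.replicate (a + 1) true ++ (l₁ ++ l₂) := by
        simp [List.replicate_succ]
      rw [h3, ih (a + 1) (l₁ ++ l₂)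
        (by simp only [List.length_append, List.length_cons] at hl ⊢; omega)
        (by omega)]
      have e1 : a + 1 + (l₁ ++ l₂).count true = a + (l₁ ++ true :: l₂).count true := by
        simp only [List.count_append, List.count_cons, beq_self_eq_true, if_true,
          beq_iff_eq]
        omega
      have e2 : (l₁ ++ l₂).count false = (l₁ ++ true :: l₂).count false := by
        simp [List.count_append, List.count_cons]
      rw [e1, e2]
    · have hl' : l = List.replicate (m + 1) false := by
        have h0 : ∀ b ∈ l, b = false := by
          intro b hb
          cases b
          · rfl
          · exact absurd hb ht
        have h1 := List.eq_replicate_of_mem h0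
        rwa [hl] at h1
      subst hl'
      simp only [List.length_replicate] at hl
      simp [List.count_replicate]


lemma fw_eq_sorted (n : ℕ) (hs : ∀ l : List Bool, l.length < n → fw A B v w l = 0)
    (l : List Bool) (hl : l.length = n) :
    fw A B v w l = fw A B v w (List.replicate (l.count true) true
      ++ List.replicate (l.count false) false) := by
  have h := fw_sort A B v w hC n hs n 0 l hl (by omega)
  simp only [List.replicate_zero, List.nil_append, Nat.zero_add] at h
  exact h

lemma pow_expand (b : ℕ) :
    B ^ b * A = A * B ^ b
      - ∑ i ∈ Finset.range b,
          B ^ i * Matrix.vecMulVec w (star v) * B ^ (b - 1 - i) := by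
  induction b with
  | zero => simp
  | succ b ih =>
    have hBA : B * A = A * B - Matrix.vecMulVec w (star v) := by rw [hC, sub_sub_cancel]
    have h1 : B ^ (b + 1) * A = B * (B ^ b * A) := by rw [pow_succ', mul_assoc]
    rw [h1, ih, mul_sub, Finset.mul_sum, ← mul_assoc B A (B ^ b), hBA, sub_mul,
      mul_assoc A B (B ^ b), ← pow_succ', Finset.sum_range_succ']
    have hf0 : B ^ 0 * Matrix.vecMulVec w (star v) * B ^ (b + 1 - 1 - 0)
        = Matrix.vecMulVec w (star v) * B ^ b := by
      simp
    have hfi : (∑ i ∈ Finset.range b,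
          B * (B ^ i * Matrix.vecMulVec w (star v) * B ^ (b - 1 - i)))
        = ∑ i ∈ Finset.range b,
          B ^ (i + 1) * Matrix.vecMulVec w (star v) * B ^ (b + 1 - 1 - (i + 1)) := by
      refine Finset.sum_congr rfl fun i _ => ?_
      have he : b + 1 - 1 - (i + 1) = b - 1 - i := by omega
      rw [he, pow_succ']
      simp only [mul_assoc]
    rw [hf0, hfi, sub_sub]
    abel

lemma fw_sorted_zero (n : ℕ) (hs : ∀ l : List Bool, l.length < n → fw A B v w l = 0)
    (a b : ℕ) (hab : a + b = n) :
    fw A B v w (List.replicate a true ++ List.replicate b false) = 0 := by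
  have key : ∀ i ∈ Finset.range b,
      Matrix.trace (A ^ a * (B ^ i * Matrix.vecMulVec w (star v) * B ^ (b - 1 - i)) * B)
        = fw A B v w (List.replicate a true ++ List.replicate b false) := by
    intro i hi
    have hib : i < b := Finset.mem_range.mp hi
    have hbe : B ^ (b - 1 - i) * B = B ^ (b - i) := by
      rw [← pow_succ]
      congr 1
      omega
    have h1 : A ^ a * (B ^ i * Matrix.vecMulVec w (star v) * B ^ (b - 1 - i)) * B
        = A ^ a * B ^ i * Matrix.vecMulVec w (star v) * B ^ (b - i) := by
      simp only [mul_assoc, hbe]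
    have h2 : B ^ (b - i) * (A ^ a * B ^ i * Matrix.vecMulVec w (star v))
        = B ^ (b - i) * (A ^ a * B ^ i) * Matrix.vecMulVec w (star v) := by
      simp only [mul_assoc]
    rw [h1, Matrix.trace_mul_comm, h2, trace_mul_vecMulVec]
    have h3 : fw A B v w (List.replicate (b - i) false
          ++ (List.replicate a true ++ List.replicate i false))
        = star v ⬝ᵥ ((B ^ (b - i) * (A ^ a * B ^ i)) *ᵥ w) := by
      simp [fw, wp_append, wp_replicate_true, wp_replicate_false]
    rw [← h3]
    have hlen : (List.replicate (b - i) false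
        ++ (List.replicate a true ++ List.replicate i false)).length = n := by
      simp only [List.length_append, List.length_replicate]
      omega
    rw [fw_eq_sorted A B v w hC n hs _ hlen]
    have hct : (List.replicate (b - i) false
        ++ (List.replicate a true ++ List.replicate i false)).count true = a := by
      simp [List.count_append, List.count_replicate]
    have hcf : (List.replicate (b - i) false
        ++ (List.replicate a true ++ List.replicate i false)).count false = b := by
      have hbi : b - i + i = b := by omega
      simp [List.count_append, List.count_replicate, hbi]
    rw [hct, hcf]
  have hc : fw A B v w (List.replicate a true ++ List.replicate b false)
      = Matrix.trace (A ^ a * B ^ b * (A * B))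
        - Matrix.trace (A ^ a * B ^ b * (B * A)) := by
    have h0 : fw A B v w (List.replicate a true ++ List.replicate b false)
        = Matrix.trace ((A ^ a * B ^ b) * Matrix.vecMulVec w (star v)) := by
      rw [trace_mul_vecMulVec]
      simp [fw, wp_append, wp_replicate_true, wp_replicate_false]
    rw [h0, hC, mul_sub, Matrix.trace_sub]
  have e2 : Matrix.trace (A ^ a * B ^ b * (B * A))
      = Matrix.trace (A ^ (a + 1) * B ^ (b + 1)) := by
    have h4 : A ^ a * B ^ b * (B * A) = (A ^ a * B ^ (b + 1)) * A := by
      simp only [pow_succ, mul_assoc]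
    have h5 : A * (A ^ a * B ^ (b + 1)) = A ^ (a + 1) * B ^ (b + 1) := by
      simp only [pow_succ', mul_assoc]
    rw [h4, Matrix.trace_mul_comm, h5]
  have e3 : Matrix.trace (A ^ a * B ^ b * (A * B))
      = Matrix.trace (A ^ (a + 1) * B ^ (b + 1))
        - (b : ℂ) * fw A B v w (List.replicate a true ++ List.replicate b false) := by
    have h5 : A ^ a * B ^ b * (A * B) = A ^ a * (B ^ b * A) * B := by
      simp only [mul_assoc]
    rw [h5, pow_expand A B v w hC b, mul_sub, sub_mul, Matrix.trace_sub]
    have t1 : A ^ a * (A * B ^ b) * B = A ^ (a + 1) * B ^ (b + 1) := by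
      simp only [pow_succ, mul_assoc]
    have t2 : Matrix.trace (A ^ a * (∑ i ∈ Finset.range b,
          B ^ i * Matrix.vecMulVec w (star v) * B ^ (b - 1 - i)) * B)
        = (b : ℂ) * fw A B v w (List.replicate a true ++ List.replicate b false) := by
      rw [Finset.mul_sum, Finset.sum_mul, Matrix.trace_sum,
        Finset.sum_congr rfl key, Finset.sum_const, Finset.card_range, nsmul_eq_mul]
    rw [t1, t2]
  rw [e3, e2] at hc
  have hz : fw A B v w (List.replicate a true ++ List.replicate b false) * (1 + (b : ℂ))
      = 0 := by
    linear_combination hc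
  rcases mul_eq_zero.mp hz with h | h
  · exact h
  · exfalso
    have hb1 : ((b : ℂ) + 1) ≠ 0 := Nat.cast_add_one_ne_zero b
    rw [add_comm] at h
    exact hb1 h

lemma fw_zero : ∀ l : List Bool, fw A B v w l = 0 := by
  suffices h : ∀ (n : ℕ) (l : List Bool), l.length = n → fw A B v w l = 0 from
    fun l => h l.length l rfl
  intro n
  induction n using Nat.strong_induction_on with
  | _ n ih =>
    intro l hl
    have hs : ∀ l' : List Bool, l'.length < n → fw A B v w l' = 0 := fun l' h =>
      ih _ h l' rfl
    have hcnt : l.count true + l.count false = n := by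
      rw [count_bool_add', hl]
    rw [fw_eq_sorted A B v w hC n hs l hl]
    exact fw_sorted_zero A B v w hC n hs _ _ hcnt

lemma fw_zero' : ∀ l : List Bool, star v ⬝ᵥ (wp A B l *ᵥ w) = 0 :=
  fw_zero A B v w hC

end WithC

/-! ### Projection machinery -/

noncomputable def Pm (U : Submodule ℂ (EuclideanSpace ℂ (Fin k))) : Matrix (Fin k) (Fin k) ℂ :=
  Matrix.toEuclideanLin.symm ((U.subtypeL.comp U.orthogonalProjectionOnto).toLinearMap)

lemma tEL_apply (M : Matrix (Fin k) (Fin k) ℂ) (x : EuclideanSpace ℂ (Fin k)) :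
    Matrix.toEuclideanLin M x = M *ᵥ x := rfl

lemma Pm_mulVec (U : Submodule ℂ (EuclideanSpace ℂ (Fin k))) (x : EuclideanSpace ℂ (Fin k)) :
    Pm U *ᵥ x = (U.subtypeL.comp U.orthogonalProjectionOnto) x := by
  rw [← tEL_apply, Pm, LinearEquiv.apply_symm_apply]
  rfl

lemma Pm_conjTranspose (U : Submodule ℂ (EuclideanSpace ℂ (Fin k))) : (Pm U)ᴴ = Pm U := by
  apply Matrix.toEuclideanLin.injective
  rw [Matrix.toEuclideanLin_conjTranspose_eq_adjoint]
  have hsym : ((U.subtypeL.comp U.orthogonalProjectionOnto).toLinearMap).IsSymmetric :=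
    (isSelfAdjoint_starProjection U).isSymmetric
  have hsa := (LinearMap.isSymmetric_iff_isSelfAdjoint _).mp hsym
  rw [LinearMap.isSelfAdjoint_iff'] at hsa
  rw [show Matrix.toEuclideanLin (Pm U)
      = (U.subtypeL.comp U.orthogonalProjectionOnto).toLinearMap from
    LinearEquiv.apply_symm_apply _ _, hsa]

lemma Pm_fix (U : Submodule ℂ (EuclideanSpace ℂ (Fin k))) (x : EuclideanSpace ℂ (Fin k))
    (hx : x ∈ U) : Pm U *ᵥ x = x := by
  rw [Pm_mulVec]
  exact congrArg WithLp.ofLp (U.starProjection_eq_self_iff.mpr hx)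

lemma Pm_kill (U : Submodule ℂ (EuclideanSpace ℂ (Fin k))) (x : EuclideanSpace ℂ (Fin k))
    (hx : x ∈ Uᗮ) : Pm U *ᵥ x = 0 := by
  rw [Pm_mulVec]
  simp [Submodule.orthogonalProjectionOnto_apply_of_mem_orthogonal hx]

lemma Pm_idem (U : Submodule ℂ (EuclideanSpace ℂ (Fin k))) : Pm U * Pm U = Pm U := by
  apply Matrix.toEuclideanLin.injective
  apply LinearMap.ext
  intro x
  apply WithLp.ofLp_injective
  rw [tEL_apply, tEL_apply, ← Matrix.mulVec_mulVec]
  exact Pm_fix U (WithLp.toLp 2 (Pm U *ᵥ x.ofLp)) (by rw [Pm_mulVec]; exact Submodule.coe_mem _)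

lemma Pm_inv (U : Submodule ℂ (EuclideanSpace ℂ (Fin k))) (M : Matrix (Fin k) (Fin k) ℂ)
    (hM : ∀ x ∈ U, (WithLp.toLp 2 (M *ᵥ x) : EuclideanSpace ℂ (Fin k)) ∈ U) :
    M * Pm U = Pm U * (M * Pm U) := by
  apply Matrix.toEuclideanLin.injective
  apply LinearMap.ext
  intro x
  have h1 : Matrix.toEuclideanLin (M * Pm U) x = M *ᵥ (Pm U *ᵥ x) := by
    rw [tEL_apply, ← Matrix.mulVec_mulVec]
  have h2 : Matrix.toEuclideanLin (Pm U * (M * Pm U)) x = Pm U *ᵥ (M *ᵥ (Pm U *ᵥ x)) := by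
    rw [tEL_apply, ← Matrix.mulVec_mulVec, ← Matrix.mulVec_mulVec]
  apply WithLp.ofLp_injective
  rw [h1, h2]
  have hmem : (WithLp.toLp 2 (M *ᵥ (Pm U *ᵥ x)) : EuclideanSpace ℂ (Fin k)) ∈ U := by
    apply hM (WithLp.toLp 2 (Pm U *ᵥ x.ofLp))
    rw [Pm_mulVec]
    exact Submodule.coe_mem _
  exact (Pm_fix U _ hmem).symm

/-! ### Trace lemmas -/

lemma trace_comm_sq (M P : Matrix (Fin k) (Fin k) ℂ) (hP1 : P * P = P) (hPH : Pᴴ = P)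
    (hMP : M * P = P * (M * P)) :
    Matrix.trace ((M * Mᴴ - Mᴴ * M) * P)
      = Matrix.trace ((P * M - M * P) * (P * M - M * P)ᴴ) := by
  have hMP2 : P * M * P = M * P := by rw [mul_assoc]; exact hMP.symm
  have hexp : (P * M - M * P) * (P * M - M * P)ᴴ
      = P * M * Mᴴ * P - P * M * P * Mᴴ - M * P * Mᴴ * P + M * P * P * Mᴴ := by
    rw [Matrix.conjTranspose_sub, Matrix.conjTranspose_mul, Matrix.conjTranspose_mul, hPH]
    noncomm_ring
  have h1 : Matrix.trace (P * M * Mᴴ * P) = Matrix.trace (M * Mᴴ * P) := by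
    rw [Matrix.trace_mul_comm,
      show P * (P * M * Mᴴ) = P * P * (M * Mᴴ) by simp only [mul_assoc], hP1,
      Matrix.trace_mul_comm]
  have h2 : Matrix.trace (P * M * P * Mᴴ) = Matrix.trace (Mᴴ * M * P) := by
    rw [hMP2, Matrix.trace_mul_comm, show Mᴴ * (M * P) = Mᴴ * M * P by rw [mul_assoc]]
  have h3 : Matrix.trace (M * P * Mᴴ * P) = Matrix.trace (Mᴴ * M * P) := by
    rw [Matrix.trace_mul_comm, show P * (M * P * Mᴴ) = P * M * P * Mᴴ by simp only [mul_assoc]]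
    exact h2
  have h4 : Matrix.trace (M * P * P * Mᴴ) = Matrix.trace (Mᴴ * M * P) := by
    rw [show M * P * P * Mᴴ = M * (P * P) * Mᴴ by simp only [mul_assoc], hP1,
      Matrix.trace_mul_comm, show Mᴴ * (M * P) = Mᴴ * M * P by rw [mul_assoc]]
  rw [hexp, sub_mul]
  simp only [Matrix.trace_sub, Matrix.trace_add]
  rw [h1, h2, h3, h4]
  ring

lemma trace_self_conj_nonneg (Y : Matrix (Fin k) (Fin k) ℂ) :
    ∃ r : ℝ, 0 ≤ r ∧ Matrix.trace (Y * Yᴴ) = (r : ℂ) := by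
  refine ⟨∑ i, ∑ j, Complex.normSq (Y i j), ?_, ?_⟩
  · exact Finset.sum_nonneg fun i _ => Finset.sum_nonneg fun j _ => Complex.normSq_nonneg _
  · push_cast
    simp only [Matrix.trace, Matrix.diag_apply, Matrix.mul_apply, Matrix.conjTranspose_apply]
    refine Finset.sum_congr rfl fun i _ => Finset.sum_congr rfl fun j _ => ?_
    rw [Complex.star_def, Complex.mul_conj]

lemma star_dot_self (x : Fin k → ℂ) :
    star x ⬝ᵥ x = ((∑ i, Complex.normSq (x i) : ℝ) : ℂ) := by
  push_cast
  simp only [dotProduct, Pi.star_apply]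
  refine Finset.sum_congr rfl fun i _ => ?_
  rw [Complex.star_def, mul_comm, Complex.mul_conj]

end ADHM
namespace ADHM

variable {k : ℕ}

lemma Pm_fix' (U : Submodule ℂ (EuclideanSpace ℂ (Fin k))) (x : Fin k → ℂ)
    (hx : (WithLp.equiv 2 (Fin k → ℂ)).symm x ∈ U) : Pm U *ᵥ x = x :=
  Pm_fix U _ hx

lemma Pm_kill' (U : Submodule ℂ (EuclideanSpace ℂ (Fin k))) (x : Fin k → ℂ)
    (hx : (WithLp.equiv 2 (Fin k → ℂ)).symm x ∈ Uᗮ) : Pm U *ᵥ x = 0 :=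
  Pm_kill U _ hx

end ADHM

section FinalTheorem

/-- If `v v* - w w* = [A,A*] + [B,B*]` and `w v* = [A,B]`, then `v = 0` and `w = 0`:
the vanishing of the hyperkähler moment map of the ADHM₁,ₖ representation forces the
vector component `Ψ = v + j w` to vanish. -/
theorem adhm_moment_map_zero_implies_vector_zero
    {k : ℕ} (A B : Matrix (Fin k) (Fin k) ℂ) (v w : Fin k → ℂ)
    (h1 : Matrix.vecMulVec v (star v) - Matrix.vecMulVec w (star w)
        = (A * Aᴴ - Aᴴ * A) + (B * Bᴴ - Bᴴ * B))
    (h2 : Matrix.vecMulVec w (star v) = A * B - B * A) :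
    v = 0 ∧ w = 0 := by
  classical
  have hword : ∀ l : List Bool, star v ⬝ᵥ (ADHM.wp A B l *ᵥ w) = 0 :=
    ADHM.fw_zero A B v w h2
  set S : Set (EuclideanSpace ℂ (Fin k)) :=
    Set.range fun l : List Bool =>
      (WithLp.equiv 2 (Fin k → ℂ)).symm (ADHM.wp A B l *ᵥ w) with hS
  set U : Submodule ℂ (EuclideanSpace ℂ (Fin k)) := Submodule.span ℂ S with hU
  have hwU : (WithLp.equiv 2 (Fin k → ℂ)).symm w ∈ U := by
    apply Submodule.subset_span
    exact ⟨[], by simp [Matrix.one_mulVec]⟩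
  have hvU : (WithLp.equiv 2 (Fin k → ℂ)).symm v ∈ Uᗮ := by
    have hle : U ≤ (ℂ ∙ ((WithLp.equiv 2 (Fin k → ℂ)).symm v))ᗮ := by
      rw [hU]
      apply Submodule.span_le.mpr
      rintro _ ⟨l, rfl⟩
      rw [SetLike.mem_coe, Submodule.mem_orthogonal_singleton_iff_inner_right]
      have := hword l
      simpa [PiLp.inner_apply, RCLike.inner_apply, dotProduct, Pi.star_apply,
        WithLp.equiv_symm_apply, mul_comm] using this
    rw [Submodule.mem_orthogonal]
    intro u hu
    exact inner_eq_zero_symm.mp (Submodule.mem_orthogonal_singleton_iff_inner_right.mp (hle hu))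
  -- invariance of U under A and B
  have hinv : ∀ (M : Matrix (Fin k) (Fin k) ℂ) (bb : Bool), (M = bif bb then A else B) →
      ∀ x ∈ U, (WithLp.toLp 2 (M *ᵥ x) : EuclideanSpace ℂ (Fin k)) ∈ U := by
    intro M bb hM x hx
    have him : (Matrix.toEuclideanLin M) '' S ⊆ S := by
      rintro _ ⟨_, ⟨l, rfl⟩, rfl⟩
      refine ⟨bb :: l, ?_⟩
      rw [Matrix.toEuclideanLin_apply]
      show WithLp.toLp 2 _ = WithLp.toLp 2 _
      apply congrArg
      rw [ADHM.wp_cons, ← hM, WithLp.ofLp_toLp]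
      exact (Matrix.mulVec_mulVec _ _ _).symm
    have h := Submodule.mem_map_of_mem (f := Matrix.toEuclideanLin M) hx
    rw [hU, Submodule.map_span] at h
    exact Submodule.span_le.mpr (him.trans Submodule.subset_span) h
  have hA : A * ADHM.Pm U = ADHM.Pm U * (A * ADHM.Pm U) :=
    ADHM.Pm_inv U A (hinv A true rfl)
  have hB : B * ADHM.Pm U = ADHM.Pm U * (B * ADHM.Pm U) :=
    ADHM.Pm_inv U B (hinv B false rfl)
  have hPw : ADHM.Pm U *ᵥ w = w := ADHM.Pm_fix' U w hwU
  have hPv : ADHM.Pm U *ᵥ v = 0 := ADHM.Pm_kill' U v hvU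
  -- trace the real moment map equation against P
  have htr := congrArg (fun M => Matrix.trace (M * ADHM.Pm U)) h1
  have l1 : Matrix.trace (Matrix.vecMulVec v (star v) * ADHM.Pm U) = 0 := by
    rw [Matrix.trace_mul_comm, ADHM.trace_mul_vecMulVec, hPv, dotProduct_zero]
  have l2 : Matrix.trace (Matrix.vecMulVec w (star w) * ADHM.Pm U)
      = ((∑ i, Complex.normSq (w i) : ℝ) : ℂ) := by
    rw [Matrix.trace_mul_comm, ADHM.trace_mul_vecMulVec, hPw, ADHM.star_dot_self]
  obtain ⟨r1, hr1, he1⟩ := ADHM.trace_self_conj_nonneg (ADHM.Pm U * A - A * ADHM.Pm U)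
  obtain ⟨r2, hr2, he2⟩ := ADHM.trace_self_conj_nonneg (ADHM.Pm U * B - B * ADHM.Pm U)
  have e1 : Matrix.trace ((A * Aᴴ - Aᴴ * A) * ADHM.Pm U) = (r1 : ℂ) :=
    (ADHM.trace_comm_sq A (ADHM.Pm U) (ADHM.Pm_idem U) (ADHM.Pm_conjTranspose U) hA).trans he1
  have e2 : Matrix.trace ((B * Bᴴ - Bᴴ * B) * ADHM.Pm U) = (r2 : ℂ) :=
    (ADHM.trace_comm_sq B (ADHM.Pm U) (ADHM.Pm_idem U) (ADHM.Pm_conjTranspose U) hB).trans he2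
  rw [sub_mul, add_mul, Matrix.trace_sub, Matrix.trace_add, l1, l2, e1, e2, zero_sub] at htr
  have hreal : -(∑ i, Complex.normSq (w i)) = r1 + r2 := by exact_mod_cast htr
  have hSnn : (0 : ℝ) ≤ ∑ i, Complex.normSq (w i) :=
    Finset.sum_nonneg fun i _ => Complex.normSq_nonneg _
  have hS0 : (∑ i, Complex.normSq (w i)) = 0 := by nlinarith
  have hw0 : w = 0 := by
    funext i
    have hterm := (Finset.sum_eq_zero_iff_of_nonneg
      (fun i _ => Complex.normSq_nonneg (w i))).mp hS0 i (Finset.mem_univ i)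
    simpa using Complex.normSq_eq_zero.mp hterm
  refine ⟨?_, hw0⟩
  rw [hw0] at h1
  have hz : Matrix.vecMulVec (0 : Fin k → ℂ) (star (0 : Fin k → ℂ)) = 0 := by
    ext i j
    simp [Matrix.vecMulVec_apply]
  rw [hz, sub_zero] at h1
  have htr2 := congrArg Matrix.trace h1
  rw [Matrix.trace_add, Matrix.trace_sub, Matrix.trace_sub,
    Matrix.trace_mul_comm A Aᴴ, Matrix.trace_mul_comm B Bᴴ, sub_self, sub_self,
    add_zero] at htr2
  have hvv : Matrix.trace (Matrix.vecMulVec v (star v))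
      = ((∑ i, Complex.normSq (v i) : ℝ) : ℂ) := by
    rw [show Matrix.vecMulVec v (star v) = 1 * Matrix.vecMulVec v (star v) from (one_mul _).symm,
      ADHM.trace_mul_vecMulVec, Matrix.one_mulVec, ADHM.star_dot_self]
  rw [hvv] at htr2
  have hv0 : (∑ i, Complex.normSq (v i)) = 0 := by exact_mod_cast htr2
  funext i
  have hterm := (Finset.sum_eq_zero_iff_of_nonneg
    (fun i _ => Complex.normSq_nonneg (v i))).mp hv0 i (Finset.mem_univ i)
  simpa using Complex.normSq_eq_zero.mp hterm

end FinalTheorem
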